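/- Let x ∈ F_{2n} be a fixed-point-free involution and let i < j be indices with i < x(i) < x(j) < j (an ed-rise, i.e., i is an excedance and j is a deficiency with x(i) < x(j)). Define y by y(i) = j, y(j) = i, y(x(i)) = x(j), y(x(j)) = x(i), and y(k) = x(k) otherwise. Then y is a fixed-point-free involution with inv(y) > inv(x). -/

import Mathlib

/-- The number of inversions of a permutation. -/
def invCount {m : ℕ} (x : Equiv.Perm (Fin m)) : ℕ :=
  ((Finset.univ : Finset (Fin m × Fin m)).filter fun p => p.1 < p.2 ∧ x p.2 < x p.1).card

/-- The injection from inversions of `x` to inversions of `y`. -/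
def edFmap {m : ℕ} (x : Equiv.Perm (Fin m)) (a b c d : Fin m) (pq : Fin m × Fin m) :
    Fin m × Fin m :=
  if pq.1 = c ∧ pq.2 ≠ d ∧ ¬ (x pq.2 < b) then (a, pq.2)
  else if pq.1 = d ∧ ¬ (x pq.2 < a) then (b, pq.2)
  else if pq.2 = b ∧ pq.1 ≠ a ∧ ¬ (c < x pq.1) then (pq.1, d)
  else if pq.2 = a ∧ ¬ (d < x pq.1) then (pq.1, c)
  else pq

/-- The left inverse of `edFmap` on inversions of `x`. -/
def edGmap {m : ℕ} (x : Equiv.Perm (Fin m)) (a b c d : Fin m) (pq : Fin m × Fin m) :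
    Fin m × Fin m :=
  if pq.1 = a ∧ ¬ (x pq.2 < b) then (c, pq.2)
  else if pq.1 = b ∧ ¬ (x pq.2 < a) then (d, pq.2)
  else if pq.2 = d ∧ ¬ (c < x pq.1) then (pq.1, b)
  else if pq.2 = c ∧ ¬ (d < x pq.1) then (pq.1, a)
  else pq

theorem ed_aux {m : ℕ} (x y : Equiv.Perm (Fin m)) (a b c d : Fin m)
    (hab : a < b) (hbc : b < c) (hcd : c < d)
    (hxa : x a = b) (hxb : x b = a) (hxc : x c = d) (hxd : x d = c)
    (hya : y a = d) (hyb : y b = c) (hyc : y c = b) (hyd : y d = a)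
    (hyk : ∀ k, k ≠ a → k ≠ b → k ≠ c → k ≠ d → y k = x k) :
    invCount x < invCount y := by
  classical
  have hac : a < c := hab.trans hbc
  have had : a < d := hac.trans hcd
  have hbd : b < d := hbc.trans hcd
  unfold invCount
  have hAd : (a, d) ∈ (Finset.univ : Finset (Fin m × Fin m)).filter
      (fun p => p.1 < p.2 ∧ y p.2 < y p.1) := by
    simp only [Finset.mem_filter, Finset.mem_univ, true_and]
    exact ⟨had, by rw [hya, hyd]; exact had⟩
  refine lt_of_le_of_lt
    (Finset.card_le_card_of_injOn (edFmap x a b c d) ?_ ?_)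
    (Finset.card_erase_lt_of_mem hAd)
  · -- maps into the erase set
    rintro ⟨p, q⟩ hpq
    simp only [Finset.mem_coe, Finset.mem_filter, Finset.mem_univ, true_and] at hpq
    obtain ⟨hlt, hv⟩ := hpq
    rw [Finset.mem_coe, Finset.mem_erase]
    simp only [Finset.mem_filter, Finset.mem_univ, true_and]
    simp only [edFmap]
    split_ifs with hc1 hc2 hc3 hc4
    · -- branch 1 : p = c, image (a, q)
      obtain ⟨hp, hqd, hB⟩ := hc1
      rw [hp] at hlt hv
      have hcq : c < q := hlt
      have hyq : y q = x q :=
        hyk q (hac.trans hcq).ne' (hbc.trans hcq).ne' hcq.ne' hqd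
      refine ⟨?_, hac.trans hcq, ?_⟩
      · intro h
        exact hqd (congrArg Prod.snd h)
      · rw [hyq, hya]
        rw [hxc] at hv
        exact hv
    · -- branch 2 : p = d, image (b, q)
      obtain ⟨hp, hB⟩ := hc2
      rw [hp] at hlt hv
      have hdq : d < q := hlt
      have hyq : y q = x q :=
        hyk q (had.trans hdq).ne' (hbd.trans hdq).ne' (hcd.trans hdq).ne' hdq.ne'
      refine ⟨?_, hbd.trans hdq, ?_⟩
      · intro h
        exact hab.ne' (congrArg Prod.fst h)
      · rw [hyq, hyb]
        rw [hxd] at hv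
        exact hv
    · -- branch 3 : q = b, image (p, d)
      obtain ⟨hq, hpa, hB⟩ := hc3
      rw [hq] at hlt hv
      have hpb : p < b := hlt
      have hyp : y p = x p :=
        hyk p hpa hpb.ne (hpb.trans hbc).ne (hpb.trans hbd).ne
      refine ⟨?_, hpb.trans hbd, ?_⟩
      · intro h
        exact hpa (congrArg Prod.fst h)
      · rw [hyp, hyd]
        rw [hxb] at hv
        exact hv
    · -- branch 4 : q = a, image (p, c)
      obtain ⟨hq, hB⟩ := hc4
      rw [hq] at hlt hv
      have hpa : p < a := hlt
      have hyp : y p = x p :=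
        hyk p hpa.ne (hpa.trans hab).ne (hpa.trans hac).ne (hpa.trans had).ne
      refine ⟨?_, hpa.trans hac, ?_⟩
      · intro h
        exact hcd.ne (congrArg Prod.snd h)
      · rw [hyp, hyc]
        rw [hxa] at hv
        exact hv
    · -- no branch: identity
      refine ⟨?_, hlt, ?_⟩
      · intro h
        have hp : p = a := congrArg Prod.fst h
        have hq : q = d := congrArg Prod.snd h
        rw [hp, hq, hxd, hxa] at hv
        exact absurd hv (asymm hbc)
      · -- y q < y p, case analysis
        by_cases hpa : p = a
        · rw [hpa] at hlt hv ⊢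
          rw [hya, hxa] at *
          rw [hxa] at hv
          by_cases hqb : q = b
          · rw [hqb, hyb]; exact hcd
          by_cases hqc : q = c
          · exfalso; rw [hqc, hxc] at hv; exact absurd hv (asymm hbd)
          by_cases hqd : q = d
          · exfalso; rw [hqd, hxd] at hv; exact absurd hv (asymm hbc)
          · rw [hyk q hlt.ne' hqb hqc hqd]
            exact hv.trans hbd
        by_cases hpb : p = b
        · rw [hpb] at hlt hv ⊢
          rw [hyb]
          rw [hxb] at hv
          by_cases hqc : q = c
          · exfalso; rw [hqc, hxc] at hv; exact absurd hv (asymm had)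
          by_cases hqd : q = d
          · exfalso; rw [hqd, hxd] at hv; exact absurd hv (asymm hac)
          · rw [hyk q (hab.trans hlt).ne' hlt.ne' hqc hqd]
            exact hv.trans hac
        by_cases hpc : p = c
        · rw [hpc] at hlt hv hc1 ⊢
          rw [hyc]
          push_neg at hc1
          by_cases hqd : q = d
          · rw [hqd, hyd]; exact hab
          · have h := hc1 rfl hqd
            rw [hyk q (hac.trans hlt).ne' (hbc.trans hlt).ne' hlt.ne' hqd]
            exact h
        by_cases hpd : p = d
        · rw [hpd] at hlt hv hc2 ⊢
          rw [hyd]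
          push_neg at hc2
          rw [hyk q (had.trans hlt).ne' (hbd.trans hlt).ne'
              (hcd.trans hlt).ne' hlt.ne']
          exact hc2 rfl
        · -- p outside
          rw [hyk p hpa hpb hpc hpd]
          by_cases hqa : q = a
          · rw [hqa] at hc4 ⊢
            rw [hya]
            push_neg at hc4
            exact hc4 rfl
          by_cases hqb : q = b
          · rw [hqb] at hc3 ⊢
            rw [hyb]
            push_neg at hc3
            exact hc3 rfl hpa
          by_cases hqc : q = c
          · rw [hqc] at hv ⊢
            rw [hyc, hxc] at *
            rw [hxc] at hv
            exact hbd.trans hv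
          by_cases hqd : q = d
          · rw [hqd] at hv ⊢
            rw [hyd]
            rw [hxd] at hv
            exact hac.trans hv
          · rw [hyk q hqa hqb hqc hqd]
            exact hv
  · -- injectivity via left inverse
    have key : ∀ s ∈ (Finset.univ : Finset (Fin m × Fin m)).filter
        (fun p => p.1 < p.2 ∧ x p.2 < x p.1),
        edGmap x a b c d (edFmap x a b c d s) = s := by
      rintro ⟨p, q⟩ hpq
      simp only [Finset.mem_filter, Finset.mem_univ, true_and] at hpq
      obtain ⟨hlt, hv⟩ := hpq
      simp only [edFmap]
      split_ifs with hc1 hc2 hc3 hc4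
      -- branch 1: G (a, q) = (p, q), with hc1 : p = c ∧ q ≠ d ∧ ¬ x q < b
      · simp only [edGmap]
        split_ifs with g1 g2 g3 g4
        · rw [hc1.1]
        · exact (g1 ⟨by trivial, hc1.2.2⟩).elim
        · exact (g1 ⟨by trivial, hc1.2.2⟩).elim
        · exact (g1 ⟨by trivial, hc1.2.2⟩).elim
        · exact (g1 ⟨by trivial, hc1.2.2⟩).elim
      -- branch 2: G (b, q) = (p, q), hc2 : p = d ∧ ¬ x q < a
      · simp only [edGmap]
        split_ifs with g1 g2 g3 g4
        · exact absurd (hab.ne' g1.1) (by simp)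
        · rw [hc2.1]
        · exact (g2 ⟨by trivial, hc2.2⟩).elim
        · exact (g2 ⟨by trivial, hc2.2⟩).elim
        · exact (g2 ⟨by trivial, hc2.2⟩).elim
      -- branch 3: G (p, d) = (p, q), hc3 : q = b ∧ p ≠ a ∧ ¬ c < x p
      · simp only [edGmap]
        split_ifs with g1 g2 g3 g4
        · exact absurd g1.1 hc3.2.1
        · exact absurd g2.1 (by rw [hc3.1] at hlt; exact hlt.ne)
        · rw [hc3.1]
        · exact (g3 ⟨by trivial, hc3.2.2⟩).elim
        · exact (g3 ⟨by trivial, hc3.2.2⟩).elim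
      -- branch 4: G (p, c) = (p, q), hc4 : q = a ∧ ¬ d < x p
      · simp only [edGmap]
        split_ifs with g1 g2 g3 g4
        · exact absurd g1.1 (by rw [hc4.1] at hlt; exact hlt.ne)
        · exact absurd g2.1 (by rw [hc4.1] at hlt; exact (hlt.trans hab).ne)
        · exact absurd g3.1 hcd.ne
        · rw [hc4.1]
        · exact (g4 ⟨by trivial, hc4.2⟩).elim
      -- branch 5: G (p, q) = (p, q)
      · simp only [edGmap]
        split_ifs with g1 g2 g3 g4
        · exfalso; rw [g1.1, hxa] at hv; exact g1.2 hv
        · exfalso; rw [g2.1, hxb] at hv; exact g2.2 hv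
        · exfalso; rw [g3.1, hxd] at hv; exact g3.2 hv
        · exfalso; rw [g4.1, hxc] at hv; exact g4.2 hv
        · rfl
    intro s hs t ht h
    rw [Finset.mem_coe] at hs ht
    rw [← key s hs, ← key t ht, h]

theorem ed_rise_covering (n : ℕ) (x y : Equiv.Perm (Fin (2 * n)))
    (hinv : x * x = 1) (hfpf : ∀ i, x i ≠ i)
    (i j : Fin (2 * n)) (h1 : i < x i) (h2 : x i < x j) (h3 : x j < j)
    (hy1 : y i = j) (hy2 : y j = i) (hy3 : y (x i) = x j) (hy4 : y (x j) = x i)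
    (hy5 : ∀ k, k ≠ i → k ≠ j → k ≠ x i → k ≠ x j → y k = x k) :
    y * y = 1 ∧ (∀ k, y k ≠ k) ∧ invCount x < invCount y := by
  have hxx : ∀ k, x (x k) = k := by
    intro k
    rw [← Equiv.Perm.mul_apply, hinv, Equiv.Perm.one_apply]
  have hij : i < j := h1.trans (h2.trans h3)
  refine ⟨?_, ?_, ?_⟩
  · ext k
    rw [Equiv.Perm.mul_apply, Equiv.Perm.one_apply]
    by_cases hk1 : k = i
    · subst hk1; rw [hy1, hy2]
    by_cases hk2 : k = j
    · subst hk2; rw [hy2, hy1]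
    by_cases hk3 : k = x i
    · rw [hk3, hy3, hy4]
    by_cases hk4 : k = x j
    · rw [hk4, hy4, hy3]
    · rw [hy5 k hk1 hk2 hk3 hk4,
        hy5 (x k) (fun h => hk3 (x.injective (h.trans (hxx i).symm)))
          (fun h => hk4 (x.injective (h.trans (hxx j).symm)))
          (fun h => hk1 (x.injective h)) (fun h => hk2 (x.injective h)),
        hxx]
  · intro k
    by_cases hk1 : k = i
    · subst hk1; rw [hy1]; exact hij.ne'
    by_cases hk2 : k = j
    · subst hk2; rw [hy2]; exact hij.ne
    by_cases hk3 : k = x i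
    · rw [hk3, hy3]; exact h2.ne'
    by_cases hk4 : k = x j
    · rw [hk4, hy4]; exact h2.ne
    · rw [hy5 k hk1 hk2 hk3 hk4]; exact hfpf k
  · exact ed_aux x y i (x i) (x j) j h1 h2 h3 rfl (hxx i) (hxx j) rfl
      hy1 hy3 hy4 hy2 (fun k ha hb hc hd => hy5 k ha hd hb hc)
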